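/- Let A : [0,∞) → gl_n(ℝ) be a differentiable solution of A' = -tr(S(A)²)·A + (1/2)[A,[A,Aᵗ]] - (1/2)tr(A)·[A,Aᵗ] defined for all t ≥ 0. Then tr(S(A(t))²) ≤ 1/(2t + tr(S(A(0))²)⁻¹) for all t > 0 (assuming A(0) is not skew-symmetric, so tr(S(A(0))²) > 0). In particular tr(S(A(t))²) → 0 as t → ∞. -/

import Mathlib

open Matrix Filter

noncomputable section

abbrev Mat (n : ℕ) := Matrix (Fin n) (Fin n) ℝ

/-- Commutator bracket of matrices. -/
def bkt {n : ℕ} (X Y : Mat n) : Mat n := X * Y - Y * X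

/-- Frobenius inner product ⟨X,Y⟩ = tr(XYᵗ). -/
def frob {n : ℕ} (X Y : Mat n) : ℝ := Matrix.trace (X * Yᵀ)

/-- Squared Frobenius norm ‖X‖² = tr(XXᵗ). -/
def sqnorm {n : ℕ} (X : Mat n) : ℝ := frob X X

/-- Symmetric part S(X) = (X+Xᵗ)/2. -/
def symPart {n : ℕ} (X : Mat n) : Mat n := (1/2 : ℝ) • (X + Xᵀ)

/-- Right-hand side of the bracket flow ODE. -/
def rhs {n : ℕ} (A : Mat n) : Mat n :=
  (-(Matrix.trace (symPart A * symPart A))) • A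
    + (1/2 : ℝ) • bkt A (bkt A Aᵀ)
    - ((1/2 : ℝ) * Matrix.trace A) • bkt A Aᵀ

lemma tr3 {n : ℕ} (X Y Z : Mat n) : Matrix.trace (X*Y*Z) = Matrix.trace (Z*X*Y) := by
  rw [Matrix.trace_mul_comm (X*Y) Z, ← mul_assoc]

lemma tr4 {n : ℕ} (W X Y Z : Mat n) : Matrix.trace (W*X*Y*Z) = Matrix.trace (Z*W*X*Y) := by
  rw [Matrix.trace_mul_comm (W*X*Y) Z, ← mul_assoc, ← mul_assoc]

lemma trace_mul_symm {n : ℕ} (X s : Mat n) (hs : sᵀ = s) :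
    Matrix.trace (Xᵀ * s) = Matrix.trace (X * s) := by
  rw [← Matrix.trace_transpose (Xᵀ * s), Matrix.transpose_mul, hs, Matrix.transpose_transpose,
    Matrix.trace_mul_comm]

lemma trace_symPart_mul {n : ℕ} (X s : Mat n) (hs : sᵀ = s) :
    Matrix.trace (symPart X * s) = Matrix.trace (X * s) := by
  rw [symPart, smul_mul_assoc, Matrix.add_mul, Matrix.trace_smul, Matrix.trace_add,
    trace_mul_symm X s hs, smul_eq_mul]
  ring

lemma key {n : ℕ} (s k : Mat n) (hs : sᵀ = s) (hk : kᵀ = -k) :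
    Matrix.trace (rhs (s + k) * s) =
      -(Matrix.trace (s * s))^2
        - Matrix.trace ((s*k - k*s) * (s*k - k*s)) := by
  have hT : (s + k)ᵀ = s - k := by rw [Matrix.transpose_add, hs, hk, sub_eq_add_neg]
  have hsym : symPart (s + k) = s := by rw [symPart, hT]; module
  have hks : Matrix.trace (k * s) = 0 := by
    have h1 : Matrix.trace ((k*s)ᵀ) = - Matrix.trace (k*s) := by
      rw [Matrix.transpose_mul, hs, hk, Matrix.mul_neg, Matrix.trace_neg, Matrix.trace_mul_comm]
    rw [Matrix.trace_transpose] at h1; linarith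
  have hb1 : bkt (s+k) (s-k) = (k*s - s*k) + (k*s - s*k) := by
    simp only [bkt]; noncomm_ring
  rw [rhs, hsym, hT, hb1]
  simp only [bkt, Matrix.add_mul, Matrix.mul_add, Matrix.sub_mul, Matrix.mul_sub,
    smul_mul_assoc, Matrix.trace_add, Matrix.trace_sub, Matrix.trace_smul, smul_eq_mul,
    mul_assoc]
  have e1 : Matrix.trace (s*(k*(s*s))) = Matrix.trace (k*(s*(s*s))) := by
    rw [Matrix.trace_mul_comm, mul_assoc, mul_assoc]
  have e2 : Matrix.trace (s*(s*(k*s))) = Matrix.trace (k*(s*(s*s))) := by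
    rw [Matrix.trace_mul_comm, mul_assoc, mul_assoc, e1]
  have e3 : Matrix.trace (s*(k*(k*s))) = Matrix.trace (k*(k*(s*s))) := by
    rw [Matrix.trace_mul_comm, mul_assoc, mul_assoc]
  have e4 : Matrix.trace (k*(s*(s*k))) = Matrix.trace (k*(k*(s*s))) := by
    rw [Matrix.trace_mul_comm, mul_assoc, mul_assoc, Matrix.trace_mul_comm, mul_assoc,
      mul_assoc, e3]
  have e5 : Matrix.trace (s*(k*(s*k))) = Matrix.trace (k*(s*(k*s))) := by
    rw [Matrix.trace_mul_comm, mul_assoc, mul_assoc]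
  have e6 : Matrix.trace (s*(k*s)) = Matrix.trace (k*(s*s)) := by
    rw [Matrix.trace_mul_comm, mul_assoc]
  rw [hks, e1, e2, e3, e4, e5, e6]
  ring

lemma symPart_transpose {n : ℕ} (X : Mat n) : (symPart X)ᵀ = symPart X := by
  simp [symPart, Matrix.transpose_add, add_comm]

lemma trace_eq_sum {n : ℕ} (X Y : Mat n) :
    Matrix.trace (X * Y) = ∑ i, ∑ j, X i j * Y j i := by
  simp [Matrix.trace, Matrix.diag, Matrix.mul_apply]

lemma trace_mul_self_eq {n : ℕ} (s : Mat n) (hs : sᵀ = s) :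
    Matrix.trace (s * s) = ∑ i, ∑ j, (s i j)^2 := by
  rw [trace_eq_sum]
  refine Finset.sum_congr rfl fun i _ => Finset.sum_congr rfl fun j _ => ?_
  have : s j i = s i j := by
    conv_lhs => rw [← hs, Matrix.transpose_apply]
  rw [this]; ring

lemma trace_sq_nonneg {n : ℕ} (s : Mat n) (hs : sᵀ = s) : 0 ≤ Matrix.trace (s * s) := by
  rw [trace_mul_self_eq s hs]; positivity

lemma trace_sq_pos {n : ℕ} (s : Mat n) (hs : sᵀ = s) (h0 : s ≠ 0) :
    0 < Matrix.trace (s * s) := by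
  rcases (trace_sq_nonneg s hs).lt_or_eq with h | h
  · exact h
  · exfalso; apply h0
    rw [trace_mul_self_eq s hs] at h
    ext i j
    have h1 : ∀ i ∈ (Finset.univ : Finset (Fin n)),
        (0:ℝ) ≤ ∑ j, (s i j)^2 := fun i _ => by positivity
    have h2 := (Finset.sum_eq_zero_iff_of_nonneg h1).1 h.symm i (Finset.mem_univ i)
    have h3 : ∀ j ∈ (Finset.univ : Finset (Fin n)), (0:ℝ) ≤ (s i j)^2 := fun j _ => by positivity
    have h4 := (Finset.sum_eq_zero_iff_of_nonneg h3).1 h2 j (Finset.mem_univ j)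
    simpa using pow_eq_zero_iff (n := 2) (by norm_num) |>.1 h4

lemma analysis (F D : ℝ → ℝ) (hder : ∀ t : ℝ, 0 ≤ t → HasDerivAt F (D t) t)
    (hDle : ∀ t : ℝ, 0 ≤ t → D t ≤ -2 * (F t)^2)
    (hnn : ∀ t : ℝ, 0 ≤ t → 0 ≤ F t) (hF0 : 0 < F 0) :
    (∀ t : ℝ, 0 < t → F t ≤ 1 / (2*t + (F 0)⁻¹)) ∧
      Filter.Tendsto F Filter.atTop (nhds 0) := by
  have hc : 0 < (F 0)⁻¹ := inv_pos.2 hF0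
  have hanti : AntitoneOn F (Set.Ici 0) := by
    apply antitoneOn_of_deriv_nonpos (convex_Ici 0)
    · exact fun t ht => (hder t ht).continuousAt.continuousWithinAt
    · intro t ht
      rw [interior_Ici] at ht
      exact (hder t (le_of_lt ht)).differentiableAt.differentiableWithinAt
    · intro t ht
      rw [interior_Ici] at ht
      rw [(hder t (le_of_lt ht)).deriv]
      nlinarith [hDle t (le_of_lt ht), sq_nonneg (F t)]
  have main : ∀ t : ℝ, 0 < t → F t ≤ 1 / (2*t + (F 0)⁻¹) := by
    intro t ht
    have hden : 0 < 2*t + (F 0)⁻¹ := by linarith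
    by_cases hft : 0 < F t
    · have hpos : ∀ u ∈ Set.Icc (0:ℝ) t, 0 < F u := fun u hu =>
        lt_of_lt_of_le hft (hanti (Set.mem_Ici.2 hu.1) (Set.mem_Ici.2 (le_of_lt ht)) hu.2)
      have hg : ∀ u ∈ Set.Icc (0:ℝ) t, HasDerivAt (fun v => (F v)⁻¹ - 2*v)
          (-(D u)/(F u)^2 - 2) u := by
        intro u hu
        have h1 := (hder u hu.1).inv (ne_of_gt (hpos u hu))
        have h2 : HasDerivAt (fun v : ℝ => 2*v) 2 u := by
          simpa using (hasDerivAt_id u).const_mul (2:ℝ)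
        exact h1.sub h2
      have hmono : MonotoneOn (fun v => (F v)⁻¹ - 2*v) (Set.Icc 0 t) := by
        apply monotoneOn_of_deriv_nonneg (convex_Icc 0 t)
        · exact fun u hu => ((hg u hu).continuousAt).continuousWithinAt
        · intro u hu
          rw [interior_Icc] at hu
          exact (hg u ⟨le_of_lt hu.1, le_of_lt hu.2⟩).differentiableAt.differentiableWithinAt
        · intro u hu
          rw [interior_Icc] at hu
          have hu' : u ∈ Set.Icc (0:ℝ) t := ⟨le_of_lt hu.1, le_of_lt hu.2⟩
          rw [(hg u hu').deriv]
          have hfu := hpos u hu'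
          have h2 : 2 * (F u)^2 ≤ -(D u) := by linarith [hDle u hu'.1]
          have h3 : 0 < (F u)^2 := by positivity
          have h4 : 2 ≤ -(D u)/(F u)^2 := by
            rw [le_div_iff₀ h3]; linarith
          linarith
      have h5 := hmono (Set.left_mem_Icc.2 (le_of_lt ht)) (Set.right_mem_Icc.2 (le_of_lt ht))
        (le_of_lt ht)
      simp only at h5
      have h6 : 2*t + (F 0)⁻¹ ≤ (F t)⁻¹ := by linarith
      calc F t = ((F t)⁻¹)⁻¹ := (inv_inv _).symm
        _ ≤ (2*t + (F 0)⁻¹)⁻¹ := by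
            apply inv_anti₀ hden h6
        _ = 1 / (2*t + (F 0)⁻¹) := (one_div _).symm
    · push_neg at hft
      have : 0 < 1 / (2*t + (F 0)⁻¹) := by positivity
      linarith
  refine ⟨main, ?_⟩
  have hb : Filter.Tendsto (fun t : ℝ => 1 / (2*t + (F 0)⁻¹)) Filter.atTop (nhds 0) := by
    have h1 : Filter.Tendsto (fun t : ℝ => 2*t + (F 0)⁻¹) Filter.atTop Filter.atTop :=
      Filter.tendsto_atTop_add_const_right _ _ (tendsto_id.const_mul_atTop (by norm_num))
    simpa [one_div, Pi.inv_def] using h1.inv_tendsto_atTop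
  apply squeeze_zero' ?_ ?_ hb
  · filter_upwards [Filter.eventually_ge_atTop (0:ℝ)] with t ht using hnn t ht
  · filter_upwards [Filter.eventually_gt_atTop (0:ℝ)] with t ht using main t ht

theorem stmt11 {n : ℕ} (A : ℝ → Mat n)
    (hA : ∀ t : ℝ, 0 ≤ t → ∀ i j, HasDerivAt (fun s => A s i j) (rhs (A t) i j) t)
    (hskew : (A 0)ᵀ ≠ -(A 0)) :
    (∀ t : ℝ, 0 < t →
      Matrix.trace (symPart (A t) * symPart (A t)) ≤
        1 / (2 * t + (Matrix.trace (symPart (A 0) * symPart (A 0)))⁻¹)) ∧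
    Filter.Tendsto (fun t => Matrix.trace (symPart (A t) * symPart (A t)))
      Filter.atTop (nhds 0) := by
  have hsymT : ∀ t : ℝ, (symPart (A t))ᵀ = symPart (A t) := fun t => symPart_transpose _
  have hsplit : ∀ X : Mat n, X = symPart X + (1/2:ℝ) • (X - Xᵀ) := by
    intro X; rw [symPart]; module
  have hkT : ∀ X : Mat n, ((1/2:ℝ) • (X - Xᵀ))ᵀ = -((1/2:ℝ) • (X - Xᵀ)) := by
    intro X
    rw [Matrix.transpose_smul, Matrix.transpose_sub, Matrix.transpose_transpose]; module
  have hSder : ∀ t : ℝ, 0 ≤ t → ∀ i j, HasDerivAt (fun u => symPart (A u) i j)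
      (symPart (rhs (A t)) i j) t := by
    intro t ht i j
    have key1 : ∀ X : Mat n, symPart X i j = (1/2:ℝ) * (X i j + X j i) := by
      intro X
      simp [symPart, Matrix.add_apply, Matrix.transpose_apply, Matrix.smul_apply, smul_eq_mul]
    simp only [key1]
    exact ((hA t ht i j).add (hA t ht j i)).const_mul _
  have hFder : ∀ t : ℝ, 0 ≤ t → HasDerivAt
      (fun u => Matrix.trace (symPart (A u) * symPart (A u)))
      (2 * Matrix.trace (rhs (A t) * symPart (A t))) t := by
    intro t ht
    have hsum : HasDerivAt (fun u => ∑ i, ∑ j, symPart (A u) i j * symPart (A u) j i)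
        (∑ i, ∑ j, (symPart (rhs (A t)) i j * symPart (A t) j i
          + symPart (A t) i j * symPart (rhs (A t)) j i)) t := by
      apply HasDerivAt.fun_sum; intro i _; apply HasDerivAt.fun_sum; intro j _
      exact (hSder t ht i j).mul (hSder t ht j i)
    have hfun : (fun u => Matrix.trace (symPart (A u) * symPart (A u)))
        = fun u => ∑ i, ∑ j, symPart (A u) i j * symPart (A u) j i := by
      funext u; rw [trace_eq_sum]
    rw [hfun]
    convert hsum using 1
    have hsplit2 : (∑ i, ∑ j, (symPart (rhs (A t)) i j * symPart (A t) j i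
          + symPart (A t) i j * symPart (rhs (A t)) j i))
        = Matrix.trace (symPart (rhs (A t)) * symPart (A t))
          + Matrix.trace (symPart (A t) * symPart (rhs (A t))) := by
      rw [trace_eq_sum, trace_eq_sum, ← Finset.sum_add_distrib]
      exact Finset.sum_congr rfl fun i _ => Finset.sum_add_distrib
    rw [hsplit2, Matrix.trace_mul_comm (symPart (A t)) (symPart (rhs (A t))),
      trace_symPart_mul _ _ (hsymT t)]
    ring
  have hDle : ∀ t : ℝ, 0 ≤ t → 2 * Matrix.trace (rhs (A t) * symPart (A t)) ≤
      -2 * (Matrix.trace (symPart (A t) * symPart (A t)))^2 := by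
    intro t _
    have h1 : A t = symPart (A t) + (1/2:ℝ) • (A t - (A t)ᵀ) := hsplit (A t)
    have h2 := key (symPart (A t)) ((1/2:ℝ) • (A t - (A t)ᵀ)) (hsymT t) (hkT (A t))
    rw [← h1] at h2
    set s := symPart (A t)
    set k := (1/2:ℝ) • (A t - (A t)ᵀ)
    have h3 : (s*k - k*s)ᵀ = s*k - k*s := by
      rw [Matrix.transpose_sub, Matrix.transpose_mul, Matrix.transpose_mul, hsymT t,
        hkT (A t), Matrix.neg_mul, Matrix.mul_neg]
      abel
    have h4 := trace_sq_nonneg _ h3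
    nlinarith [h2, h4]
  have hnn : ∀ t : ℝ, 0 ≤ t → 0 ≤ Matrix.trace (symPart (A t) * symPart (A t)) :=
    fun t _ => trace_sq_nonneg _ (hsymT t)
  have hF0 : 0 < Matrix.trace (symPart (A 0) * symPart (A 0)) := by
    apply trace_sq_pos _ (hsymT 0)
    intro h
    apply hskew
    rw [symPart] at h
    have h2 : A 0 + (A 0)ᵀ = 0 := by
      have h3 := congrArg (fun M : Mat n => (2:ℝ) • M) h
      simpa [smul_smul] using h3
    exact eq_neg_of_add_eq_zero_right h2
  exact analysis (fun t => Matrix.trace (symPart (A t) * symPart (A t)))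
    (fun t => 2 * Matrix.trace (rhs (A t) * symPart (A t))) hFder hDle hnn hF0
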